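/- For every k ≥ 1 there exists a finite triangle-free simple graph G with chromatic number χ(G) > k. (Abstract graph-theoretic statement underlying the segment construction.) -/

import Mathlib

open SimpleGraph

/-- The shift graph on pairs from `Fin m`: vertices `(a,b)` with `a < b`,
edges between `(a,b)` and `(b,c)`. -/
def shiftGraph (m : ℕ) : SimpleGraph (Fin m × Fin m) where
  Adj p q := p.1 < p.2 ∧ q.1 < q.2 ∧ (p.2 = q.1 ∨ q.2 = p.1)
  symm := by
    constructor
    rintro p q ⟨h1, h2, h3⟩
    exact ⟨h2, h1, h3.symm⟩
  loopless := by
    constructor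
    rintro p ⟨h1, -, h3 | h3⟩ <;> exact absurd h3.symm (ne_of_lt h1)

lemma shiftGraph_triangleFree (m : ℕ) : (shiftGraph m).CliqueFree 3 := by
  intro t ht
  rw [is3Clique_iff] at ht
  obtain ⟨a, b, c, hab, hac, hbc, -⟩ := ht
  obtain ⟨ha1, hb1, hab'⟩ := hab
  obtain ⟨-, hc1, hac'⟩ := hac
  obtain ⟨-, -, hbc'⟩ := hbc
  simp only [Fin.lt_def] at ha1 hb1 hc1
  rcases hab' with h | h <;> rcases hac' with h' | h' <;> rcases hbc' with h'' | h'' <;>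
    [skip; skip; skip; skip; skip; skip; skip; skip] <;>
  · have := congrArg Fin.val h
    have := congrArg Fin.val h'
    have := congrArg Fin.val h''
    omega

lemma shiftGraph_not_colorable (k : ℕ) : ¬ (shiftGraph (2 ^ k + 1)).Colorable k := by
  set m := 2 ^ k + 1 with hm
  rintro ⟨C⟩
  -- assign to each `i` the set of colors appearing on pairs `(i, j)` with `i < j`
  set F : Fin m → Finset (Fin k) :=
    fun i => Finset.univ.filter (fun c => ∃ j, i < j ∧ C (i, j) = c) with hF
  have key : ∀ i i' : Fin m, i < i' → F i = F i' → False := by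
    intro i i' hii' hFF
    have h1 : C (i, i') ∈ F i := by
      simp only [hF, Finset.mem_filter, Finset.mem_univ, true_and]
      exact ⟨i', hii', rfl⟩
    rw [hFF] at h1
    simp only [hF, Finset.mem_filter, Finset.mem_univ, true_and] at h1
    obtain ⟨j, hj, hCj⟩ := h1
    have hadj : (shiftGraph m).Adj (i, i') (i', j) := ⟨hii', hj, Or.inl rfl⟩
    exact C.valid hadj hCj.symm
  have hinj : Function.Injective F := by
    intro i i' h
    rcases lt_trichotomy i i' with hlt | heq | hgt
    · exact absurd (key i i' hlt h) not_false
    · exact heq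
    · exact absurd (key i' i hgt h.symm) not_false
  have hcard := Fintype.card_le_of_injective F hinj
  simp only [Fintype.card_fin, Fintype.card_finset, Fintype.card_fin] at hcard
  omega

/-- For every `k ≥ 1` there is a finite triangle-free simple graph with chromatic
number greater than `k`. -/
theorem exists_triangle_free_large_chromatic :
    ∀ k : ℕ, 1 ≤ k → ∃ (n : ℕ) (G : SimpleGraph (Fin n)),
      G.CliqueFree 3 ∧ (k : ℕ∞) < G.chromaticNumber := by
  intro k _
  set m := 2 ^ k + 1 with hm
  set e : Fin m × Fin m ≃ Fin (m * m) := finProdFinEquiv with he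
  refine ⟨m * m, (shiftGraph m).comap e.symm, ?_, ?_⟩
  · exact (shiftGraph_triangleFree m).comap ⟨(Embedding.comap e.symm.toEmbedding _).toCopy⟩
  · rw [lt_iff_not_ge]
    intro hle
    have hcol : ((shiftGraph m).comap e.symm).Colorable k :=
      chromaticNumber_le_iff_colorable.mp hle
    obtain ⟨C⟩ := hcol
    refine shiftGraph_not_colorable k ⟨⟨fun p => C (e p), ?_⟩⟩
    intro p q hpq
    apply C.valid
    show (shiftGraph m).Adj (e.symm (e p)) (e.symm (e q))
    simpa using hpq
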